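/- With state parameters δ = 0, c = √(9/15) and measurement parameters α = β = π/3, φ = ξ = π/2, the Cabello state |Ψ^C⟩ satisfies the two zero-probability constraints and achieves degree of success S = P(+,+|A_1,B_1) − P(+,+|A_0,B_0) = 3/80 > 0. -/

import Mathlib

open Complex Real Matrix

theorem cabello_example_three_eightieths :
    let c : ℝ := Real.sqrt (9 / 15)
    let α : ℝ := Real.pi / 3
    let β : ℝ := Real.pi / 3
    let φ : ℝ := Real.pi / 2
    let ξ : ℝ := Real.pi / 2
    let Ψ : Matrix (Fin 2) (Fin 2) ℂ :=
      !![(Real.sqrt (1 - c ^ 2 * (1 + Real.tan (α / 2) ^ 2 + Real.tan (β / 2) ^ 2)) : ℂ),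
          -(c : ℂ) * Complex.exp (-Complex.I * φ) * (Real.tan (α / 2) : ℂ);
          -(c : ℂ) * Complex.exp (-Complex.I * ξ) * (Real.tan (β / 2) : ℂ), (c : ℂ)]
    let u : Fin 2 → ℂ := ![(Real.cos (α / 2) : ℂ),
          Complex.exp (Complex.I * φ) * (Real.sin (α / 2) : ℂ)]
    let v : Fin 2 → ℂ := ![(Real.cos (β / 2) : ℂ),
          Complex.exp (Complex.I * ξ) * (Real.sin (β / 2) : ℂ)]
    let e1 : Fin 2 → ℂ := ![0, 1]
    -- P(+,-|A₁,B₀) = 0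
    ‖∑ i, ∑ j, (starRingEnd ℂ) (Ψ i j) * (u i * e1 j)‖ ^ 2 = 0 ∧
    -- P(-,+|A₀,B₁) = 0
    ‖∑ i, ∑ j, (starRingEnd ℂ) (Ψ i j) * (e1 i * v j)‖ ^ 2 = 0 ∧
    -- S = p - q = 3/80 > 0
    ‖∑ i, ∑ j, (starRingEnd ℂ) (Ψ i j) * (u i * v j)‖ ^ 2
      - ‖Ψ 0 0‖ ^ 2 = 3 / 80 := by
  intro c α β φ ξ Ψ u v e1
  have hπ6 : α / 2 = π / 6 := by simp only [α]; ring
  have htan : Real.tan (α / 2) = 1 / Real.sqrt 3 := by rw [hπ6, Real.tan_pi_div_six]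
  have hcos : Real.cos (α / 2) = Real.sqrt 3 / 2 := by rw [hπ6, Real.cos_pi_div_six]
  have hsin : Real.sin (α / 2) = 1 / 2 := by rw [hπ6, Real.sin_pi_div_six]
  have h3 : Real.sqrt 3 ^ 2 = 3 := Real.sq_sqrt (by norm_num)
  have h3c : ((Real.sqrt 3 : ℝ) : ℂ) ^ 2 = 3 := by
    rw [← Complex.ofReal_pow, h3]; norm_num
  have h3ne : ((Real.sqrt 3 : ℝ) : ℂ) ≠ 0 := by
    simp only [ne_eq, Complex.ofReal_eq_zero]; exact (Real.sqrt_pos.2 (by norm_num : (0:ℝ) < 3)).ne'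
  have hc2 : c ^ 2 = 9 / 15 := Real.sq_sqrt (by norm_num)
  have hc2c : ((c : ℝ) : ℂ) ^ 2 = 9 / 15 := by
    rw [← Complex.ofReal_pow, hc2]; norm_num
  have hzero : Real.sqrt (1 - c ^ 2 * (1 + Real.tan (α / 2) ^ 2 + Real.tan (β / 2) ^ 2)) = 0 := by
    have ht2 : Real.tan (α/2) ^ 2 = 1/3 := by
      rw [htan, div_pow, h3]; norm_num
    have : (1 : ℝ) - c ^ 2 * (1 + Real.tan (α / 2) ^ 2 + Real.tan (β / 2) ^ 2) = 0 := by
      rw [show Real.tan (β/2) = Real.tan (α/2) from rfl] at *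
      rw [ht2, hc2]; ring
    rw [this, Real.sqrt_zero]
  have hexp : Complex.exp (Complex.I * (φ : ℝ)) = Complex.I := by
    simp only [φ]; push_cast
    rw [mul_comm, Complex.exp_mul_I]; simp
  have hexp' : Complex.exp (-Complex.I * (φ : ℝ)) = -Complex.I := by
    rw [neg_mul, Complex.exp_neg, hexp, Complex.inv_I]
  have hΨ00 : Ψ 0 0 = 0 := by
    show ((Real.sqrt _ : ℝ) : ℂ) = 0
    rw [hzero]; norm_num
  have hΨ01 : Ψ 0 1 = (c : ℂ) * Complex.I * (1 / (Real.sqrt 3 : ℝ)) := by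
    show -(c:ℂ) * Complex.exp (-Complex.I * (φ:ℝ)) * ((Real.tan (α/2) : ℝ) : ℂ) = _
    rw [hexp', htan]; push_cast; ring
  have hΨ10 : Ψ 1 0 = (c : ℂ) * Complex.I * (1 / (Real.sqrt 3 : ℝ)) := by
    show -(c:ℂ) * Complex.exp (-Complex.I * (φ:ℝ)) * ((Real.tan (α/2) : ℝ) : ℂ) = _
    rw [hexp', htan]; push_cast; ring
  have hΨ11 : Ψ 1 1 = (c : ℂ) := rfl
  have hu0 : u 0 = ((Real.sqrt 3 : ℝ) : ℂ) / 2 := by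
    show ((Real.cos (α/2) : ℝ) : ℂ) = _
    rw [hcos]; push_cast; ring
  have hu1 : u 1 = Complex.I / 2 := by
    show Complex.exp (Complex.I * (φ:ℝ)) * ((Real.sin (α/2) : ℝ) : ℂ) = _
    rw [hexp, hsin]; push_cast; ring
  have hv0 : v 0 = ((Real.sqrt 3 : ℝ) : ℂ) / 2 := hu0
  have hv1 : v 1 = Complex.I / 2 := hu1
  have he0 : e1 0 = 0 := rfl
  have he1 : e1 1 = 1 := rfl
  refine ⟨?_, ?_, ?_⟩
  · have : (∑ i, ∑ j, (starRingEnd ℂ) (Ψ i j) * (u i * e1 j)) = 0 := by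
      simp only [Fin.sum_univ_two, hΨ00, hΨ01, hΨ10, hΨ11, hu0, hu1, he0, he1,
        _root_.map_mul, map_zero, Complex.conj_I, Complex.conj_ofReal, _root_.map_one, map_div₀, map_ofNat]
      field_simp
      ring_nf
    rw [this]; simp
  · have : (∑ i, ∑ j, (starRingEnd ℂ) (Ψ i j) * (e1 i * v j)) = 0 := by
      simp only [Fin.sum_univ_two, hΨ00, hΨ01, hΨ10, hΨ11, hv0, hv1, he0, he1,
        _root_.map_mul, map_zero, Complex.conj_I, Complex.conj_ofReal, _root_.map_one, map_div₀, map_ofNat]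
      field_simp
      ring_nf
    rw [this]; simp
  · have hsum : (∑ i, ∑ j, (starRingEnd ℂ) (Ψ i j) * (u i * v j)) = ((c / 4 : ℝ) : ℂ) := by
      simp only [Fin.sum_univ_two, hΨ00, hΨ01, hΨ10, hΨ11, hu0, hu1, hv0, hv1,
        _root_.map_mul, map_zero, Complex.conj_I, Complex.conj_ofReal, _root_.map_one, map_div₀, map_ofNat]
      push_cast
      field_simp
      ring_nf
      simp only [Complex.I_sq]
      ring_nf
    rw [hsum, hΨ00]
    simp only [map_zero, norm_zero, Complex.norm_real, Real.norm_eq_abs]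
    rw [_root_.abs_of_nonneg (by positivity : (0:ℝ) ≤ c/4)]
    rw [div_pow, hc2]
    norm_num
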